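/- Let q ≥ 2, Q = q^2, m ≥ 3, 2 ≤ t ≤ m-1, and suppose u is an integer with 0 < u ≤ Q^{m-t}, u not of the form q·Q^l for any 0 ≤ l ≤ m-t-1. If the base-Q expansion of u(Q-1)q is a_{m-t+1}Q^{m-t+1} + ... + a_0 with a_{m-t+1} < q, then q divides a_0. Moreover the base-Q expansion of u(Q-1)q has at least two nonzero digits. -/
import Mathlib

lemma digits_all_zero {b n : ℕ} (h : ∀ x ∈ Nat.digits b n, x = 0) : n = 0 := by
  by_contra h0
  have hnil : Nat.digits b n ≠ [] := Nat.digits_ne_nil_iff_ne_zero.mpr h0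
  have hmem := List.getLast_mem hnil
  exact Nat.getLast_digit_ne_zero b h0 (h _ hmem)

lemma digits_countP_one {b n : ℕ} (hb : 2 ≤ b)
    (h : (Nat.digits b n).countP (fun d => decide (d ≠ 0)) = 1) :
    ∃ a k, 0 < a ∧ a < b ∧ n = a * b ^ k := by
  induction n using Nat.strong_induction_on with
  | _ n ih =>
    rcases Nat.eq_zero_or_pos n with h0 | h0
    · subst h0; simp at h
    · rw [Nat.digits_def' (by omega : 1 < b) h0, List.countP_cons] at h
      by_cases hm : n % b = 0
      · have h' : (Nat.digits b (n / b)).countP (fun d => decide (d ≠ 0)) = 1 := by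
          simpa [hm] using h
        obtain ⟨a, k, ha, hab, hk⟩ := ih (n / b) (Nat.div_lt_self h0 (by omega)) h'
        refine ⟨a, k + 1, ha, hab, ?_⟩
        have hd := Nat.div_add_mod n b
        have : n / b = a * b ^ k := hk
        rw [pow_succ]
        nlinarith
      · have h' : ∀ x ∈ Nat.digits b (n / b), x = 0 := by
          have : (Nat.digits b (n / b)).countP (fun d => decide (d ≠ 0)) = 0 := by
            simpa [hm] using h
          intro x hx
          have := List.countP_eq_zero.mp this x hx
          simpa using this
        have hz : n / b = 0 := digits_all_zero h'
        refine ⟨n, 0, h0, ?_, by simp⟩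
        have hd := Nat.div_add_mod n b
        rw [hz, Nat.mul_zero, Nat.zero_add] at hd
        have hlt := Nat.mod_lt n (show 0 < b by omega)
        omega

/-- for `u` in the given range not of the form `q·Q^l`, the least
significant base-`Q` digit of `u(Q-1)q` is divisible by `q`, and the base-`Q`
expansion of `u(Q-1)q` has at least two nonzero digits (here `Q = q^2`). -/
theorem stmt5 (q m t u : ℕ) (hq : 2 ≤ q) (hm : 3 ≤ m) (ht : 2 ≤ t) (htm : t ≤ m - 1)
    (hu0 : 0 < u) (hu : u ≤ (q ^ 2) ^ (m - t))
    (hform : ∀ l ≤ m - t - 1, u ≠ q * (q ^ 2) ^ l)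
    (hlead : u * (q ^ 2 - 1) * q < q * (q ^ 2) ^ (m - t + 1)) :
    q ∣ (u * (q ^ 2 - 1) * q) % (q ^ 2) ∧
      2 ≤ (Nat.digits (q ^ 2) (u * (q ^ 2 - 1) * q)).countP (fun d => decide (d ≠ 0)) := by
  have hQ : 2 ≤ q ^ 2 := by nlinarith
  set N := u * (q ^ 2 - 1) * q with hN
  constructor
  · rw [Nat.dvd_mod_iff (dvd_pow_self q (by norm_num))]
    exact ⟨u * (q ^ 2 - 1), by rw [hN]; ring⟩
  · by_contra hc
    push_neg at hc
    have hNpos : 0 < N := by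
      have h1 : 1 ≤ q ^ 2 - 1 := by omega
      have : 1 * 1 * 2 ≤ u * (q ^ 2 - 1) * q :=
        Nat.mul_le_mul (Nat.mul_le_mul hu0 h1) hq
      omega
    interval_cases hcount : (Nat.digits (q ^ 2) N).countP (fun d => decide (d ≠ 0))
    · have : N = 0 := by
        apply digits_all_zero
        intro x hx
        have := List.countP_eq_zero.mp hcount x hx
        simpa using this
      omega
    · obtain ⟨a, k, ha, hab, hk⟩ := digits_countP_one hQ hcount
      have hdvd : (q ^ 2 - 1) ∣ N := ⟨u * q, by rw [hN]; ring⟩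
      rw [hk] at hdvd
      have hcop : Nat.Coprime (q ^ 2 - 1) ((q ^ 2) ^ k) := by
        apply Nat.Coprime.pow_right
        have h1 : q ^ 2 - 1 + 1 = q ^ 2 := by omega
        rw [← h1]
        exact Nat.coprime_self_add_right.mpr (Nat.coprime_one_right _)
      have hda : (q ^ 2 - 1) ∣ a := hcop.dvd_of_dvd_mul_right hdvd
      have haeq : a = q ^ 2 - 1 := by
        have := Nat.le_of_dvd ha hda
        omega
      subst haeq
      have huq : u * q = (q ^ 2) ^ k := by
        have h1 : (q ^ 2 - 1) * (u * q) = (q ^ 2 - 1) * (q ^ 2) ^ k := by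
          rw [← hk, hN]; ring
        exact Nat.eq_of_mul_eq_mul_left (by omega) h1
      have hk1 : 1 ≤ k := by
        by_contra hk0
        have hk0' : k = 0 := by omega
        rw [hk0', pow_zero] at huq
        nlinarith
      have hueq : u = q * (q ^ 2) ^ (k - 1) := by
        have h1 : u * q = (q * (q ^ 2) ^ (k - 1)) * q := by
          rw [huq]
          conv_lhs => rw [show k = (k - 1) + 1 by omega]
          rw [pow_succ]; ring
        exact Nat.eq_of_mul_eq_mul_right (by omega) h1
      have hkle : k - 1 ≤ m - t - 1 := by
        by_contra hgt
        push_neg at hgt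
        have h2 : m - t ≤ k - 1 := by omega
        have h3 : (q ^ 2) ^ (m - t) ≤ (q ^ 2) ^ (k - 1) := Nat.pow_le_pow_right (by omega) h2
        have hub : q * (q ^ 2) ^ (k - 1) ≤ (q ^ 2) ^ (m - t) := hueq ▸ hu
        have hpos : 0 < (q ^ 2) ^ (k - 1) := pow_pos (by omega) _
        nlinarith
      exact hform (k - 1) hkle hueq
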